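/- The product formula e^t \prod_{i\ge 3} e^{zq[i-2]_q t^i/i!}, when the coefficient of z^s t^{m}/m! is extracted, equals \sum q^{e_1 + ... + e_s} summed over all partitions of {1,...,m} into blocks where exactly s blocks have size \ge 3 and carry an exponent e_j with 1 \le e_j \le (\text{block size}) - 2, at most one additional block (of size \ge 2, containing m) has exponent 0, and all remaining elements are singletons. -/

import Mathlib

/-- The exponential series `e^t`. -/
noncomputable def Eexp : PowerSeries (Polynomial ℚ) :=
  PowerSeries.mk fun n => Polynomial.C ((n.factorial : ℚ)⁻¹)

/-- `M = ∑_{i ≥ 3} q·[i-2]_q · t^i/i!`, so that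
`e^t ∏_{i≥3} e^{z q [i-2]_q t^i/i!} = e^t · e^{zM}`. -/
noncomputable def Mser : PowerSeries (Polynomial ℚ) :=
  PowerSeries.mk fun i =>
    if 3 ≤ i then ((i.factorial : ℚ)⁻¹) • ∑ e ∈ Finset.Icc 1 (i - 2), Polynomial.X ^ e
    else 0

namespace S15

open PowerSeries Finset

lemma coeff_derivativeFun' (f : PowerSeries (Polynomial ℚ)) (n : ℕ) :
    PowerSeries.coeff n f.derivativeFun = PowerSeries.coeff (n + 1) f * (n + 1) :=
  PowerSeries.coeff_derivative f n

noncomputable def W (i : ℕ) : Polynomial ℚ := ∑ e ∈ Finset.Icc 1 (i - 2), Polynomial.X ^ e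

noncomputable def F (n s : ℕ) : Polynomial ℚ :=
  ((s.factorial : ℚ)⁻¹ * (n.factorial : ℚ)) • PowerSeries.coeff n (Eexp * Mser ^ s)

lemma F_zero (n : ℕ) : F n 0 = 1 := by
  simp only [F, pow_zero, mul_one, Eexp, PowerSeries.coeff_mk]
  rw [Polynomial.smul_C, smul_eq_mul]
  rw [show ((Nat.factorial 0 : ℚ))⁻¹ * (n.factorial:ℚ) * ((n.factorial:ℚ))⁻¹ = 1 by
    field_simp; simp]
  simp

lemma F_zero' (s : ℕ) : F 0 (s + 1) = 0 := by
  simp only [F]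
  rw [PowerSeries.coeff_zero_eq_constantCoeff, map_mul, map_pow]
  have : PowerSeries.constantCoeff Mser = 0 := by
    simp [Mser, ← PowerSeries.coeff_zero_eq_constantCoeff]
  rw [this]
  simp

lemma derivative_Eexp : PowerSeries.derivativeFun Eexp = Eexp := by
  ext n : 1
  rw [S15.coeff_derivativeFun']
  simp only [Eexp, PowerSeries.coeff_mk]
  rw [show ((n:Polynomial ℚ) + 1) = Polynomial.C ((n:ℚ)+1) by rw [map_add, map_one]; simp]
  rw [← Polynomial.C_mul]
  congr 1
  rw [Nat.factorial_succ]
  have h1 : ((n:ℚ)+1) ≠ 0 := by positivity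
  have h2 : ((n.factorial:ℚ)) ≠ 0 := by exact_mod_cast Nat.factorial_ne_zero n
  field_simp
  push_cast; ring

lemma coeff_dM (k : ℕ) :
    PowerSeries.coeff k (PowerSeries.derivativeFun Mser)
      = ((k.factorial : ℚ)⁻¹) • W (k + 1) := by
  rw [S15.coeff_derivativeFun']
  simp only [Mser, PowerSeries.coeff_mk]
  by_cases h : 3 ≤ k + 1
  · rw [if_pos h]
    rw [show ((k:Polynomial ℚ) + 1) = Polynomial.C ((k:ℚ)+1) by rw [map_add, map_one]; simp]
    rw [smul_mul_assoc, mul_comm, ← Polynomial.smul_eq_C_mul, smul_smul, W]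
    congr 1
    have h2 : ((k.factorial:ℚ)) ≠ 0 := by exact_mod_cast Nat.factorial_ne_zero k
    have h3 : (((k+1).factorial:ℚ)) ≠ 0 := by exact_mod_cast Nat.factorial_ne_zero (k+1)
    rw [Nat.factorial_succ] at h3 ⊢
    push_cast at h3 ⊢
    field_simp
  · rw [if_neg h]
    rw [zero_mul]
    have : k + 1 - 2 = 0 := by omega
    rw [W, this]
    simp

lemma derivativeFun_pow (f : PowerSeries (Polynomial ℚ)) (k : ℕ) :
    PowerSeries.derivativeFun (f ^ (k + 1))
      = (k + 1) • (f ^ k * PowerSeries.derivativeFun f) := by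
  induction k with
  | zero => simp
  | succ k ih =>
    rw [pow_succ, PowerSeries.derivativeFun_mul, ih]
    simp only [smul_eq_mul, nsmul_eq_mul]
    push_cast
    ring

lemma F_rec (n s : ℕ) :
    F (n + 1) (s + 1) = F n (s + 1)
      + ∑ k ∈ range (n + 1), (n.choose k) • (W (n - k + 1) * F k s) := by
  have h1 : (PowerSeries.derivativeFun) (Eexp * Mser ^ (s+1))
      = Eexp * Mser ^ (s+1)
        + (s+1) • (Eexp * Mser ^ s * (PowerSeries.derivativeFun Mser)) := by
    rw [PowerSeries.derivativeFun_mul, derivativeFun_pow, derivative_Eexp]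
    simp only [smul_eq_mul, nsmul_eq_mul]
    push_cast
    ring
  have h3 : PowerSeries.coeff (R := Polynomial ℚ) n (Eexp * Mser ^ s * PowerSeries.derivativeFun Mser)
      = ∑ k ∈ range (n+1), (((n-k).factorial:ℚ)⁻¹)
          • (PowerSeries.coeff (R := Polynomial ℚ) k (Eexp * Mser ^ s) * W (n-k+1)) := by
    rw [PowerSeries.coeff_mul, Finset.Nat.sum_antidiagonal_eq_sum_range_succ_mk]
    refine Finset.sum_congr rfl fun k hk => ?_
    rw [coeff_dM, mul_smul_comm]
  have h2 := congrArg (PowerSeries.coeff (R := Polynomial ℚ) n) h1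
  rw [S15.coeff_derivativeFun', map_add, map_nsmul, h3] at h2
  have hne : ((n:ℚ)+1) ≠ 0 := by positivity
  have hx : PowerSeries.coeff (R := Polynomial ℚ) (n+1) (Eexp * Mser ^ (s+1))
      = ((n:ℚ)+1)⁻¹ • (PowerSeries.coeff (R := Polynomial ℚ) n (Eexp * Mser ^ (s+1))
          + (s+1) • ∑ k ∈ range (n+1), (((n-k).factorial:ℚ)⁻¹)
              • (PowerSeries.coeff (R := Polynomial ℚ) k (Eexp * Mser ^ s) * W (n-k+1))) := by
    rw [← h2, show ((n : Polynomial ℚ) + 1) = Polynomial.C ((n:ℚ)+1) by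
      rw [map_add, map_one]; simp]
    rw [mul_comm ((PowerSeries.coeff (R := Polynomial ℚ) (n+1)) (Eexp * Mser ^ (s+1))),
      ← Polynomial.smul_eq_C_mul, inv_smul_smul₀ hne]
  show ((((s+1).factorial : ℚ))⁻¹ * (((n+1).factorial : ℚ))) • _ = _
  rw [hx, smul_smul, smul_add]
  congr 1
  · show _ = (((s+1).factorial : ℚ)⁻¹ * ((n).factorial : ℚ)) • _
    congr 1
    rw [Nat.factorial_succ n]
    push_cast
    field_simp
  · rw [smul_comm, Finset.smul_sum, Finset.smul_sum]
    refine Finset.sum_congr rfl fun k hk => ?_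
    rw [Finset.mem_range, Nat.lt_succ_iff] at hk
    show _ = (n.choose k) • (W (n-k+1) * ((((s).factorial : ℚ))⁻¹ * (((k).factorial : ℚ))) • _)
    simp only [← Nat.cast_smul_eq_nsmul ℚ, smul_smul, mul_smul_comm]
    rw [mul_comm (W (n-k+1))]
    congr 1
    have hc : ((n.choose k : ℚ)) * k.factorial * (n-k).factorial = n.factorial := by
      exact_mod_cast Nat.choose_mul_factorial_mul_factorial hk
    have hfn : (((n+1).factorial : ℚ)) = ((n:ℚ)+1) * n.factorial := by
      rw [Nat.factorial_succ]; push_cast; ring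
    have hfs : (((s+1).factorial : ℚ)) = ((s:ℚ)+1) * s.factorial := by
      rw [Nat.factorial_succ]; push_cast; ring
    have h2' : ((s.factorial:ℚ)) ≠ 0 := by exact_mod_cast Nat.factorial_ne_zero s
    have h3' : ((k.factorial:ℚ)) ≠ 0 := by exact_mod_cast Nat.factorial_ne_zero k
    have h4' : (((n-k).factorial:ℚ)) ≠ 0 := by exact_mod_cast Nat.factorial_ne_zero (n-k)
    have h5' : ((s:ℚ)+1) ≠ 0 := by positivity
    rw [hfn, hfs, ← hc]
    field_simp
    push_cast
    ring

section Comb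

variable (m : ℕ)

/-- A potential block-with-exponent. -/
abbrev Pr (m : ℕ) := Finset (Fin (m+1)) × Fin (m+1)

/-- `S` is a good family of special blocks inside ground set `G`. -/
def good (G : Finset (Fin (m+1))) (s : ℕ) (S : Finset (Pr m)) : Prop :=
  (∀ p ∈ S, p.1 ⊆ G ∧ 1 ≤ (p.2:ℕ) ∧ (p.2:ℕ) ≤ p.1.card - 2) ∧
  (∀ p ∈ S, ∀ q ∈ S, p ≠ q → Disjoint p.1 q.1) ∧ S.card = s

open Classical in
noncomputable def R (G : Finset (Fin (m+1))) (s : ℕ) : Polynomial ℚ :=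
  ∑ S ∈ Finset.univ.filter (good m G s), Polynomial.X ^ (∑ p ∈ S, (p.2:ℕ))

lemma R_zero (G : Finset (Fin (m+1))) : R m G 0 = 1 := by
  classical
  rw [R]
  have h : Finset.univ.filter (good m G 0) = {∅} := by
    ext S
    simp only [Finset.mem_filter, Finset.mem_univ, true_and, Finset.mem_singleton, good]
    constructor
    · rintro ⟨-, -, hc⟩; exact Finset.card_eq_zero.mp hc
    · rintro rfl; simp
  rw [h]
  simp

lemma R_empty (s : ℕ) : R m (∅ : Finset (Fin (m+1))) (s+1) = 0 := by
  classical
  rw [R]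
  have h : Finset.univ.filter (good m (∅ : Finset (Fin (m+1))) (s+1)) = ∅ := by
    ext S
    simp only [Finset.mem_filter, Finset.mem_univ, true_and, Finset.notMem_empty, iff_false]
    rintro ⟨h1, -, hc⟩
    have hne : S.Nonempty := Finset.card_pos.mp (by omega)
    obtain ⟨p, hp⟩ := hne
    obtain ⟨hsub, he1, he2⟩ := h1 p hp
    have : p.1.card = 0 := by
      rw [Finset.card_eq_zero]
      exact Finset.subset_empty.mp hsub
    omega
  rw [h]
  simp

set_option maxHeartbeats 2000000 in
open Classical in
lemma R_rec (G : Finset (Fin (m+1))) (hG : G.Nonempty) (s : ℕ) :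
    R m G (s+1) = R m (G.erase (G.min' hG)) (s+1)
      + ∑ p0 ∈ Finset.univ.filter (fun p : Pr m =>
            p.1 ⊆ G ∧ G.min' hG ∈ p.1 ∧ 1 ≤ (p.2:ℕ) ∧ (p.2:ℕ) ≤ p.1.card - 2),
          Polynomial.X ^ ((p0.2:ℕ)) * R m (G \ p0.1) s := by
  classical
  set g0 := G.min' hG with hg0
  rw [show R m G (s+1) = ∑ S ∈ Finset.univ.filter (good m G (s+1)),
      Polynomial.X ^ (∑ p ∈ S, (p.2:ℕ)) from rfl]
  rw [← Finset.sum_filter_add_sum_filter_not (Finset.univ.filter (good m G (s+1)))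
      (fun S => ∀ p ∈ S, g0 ∉ p.1)]
  refine congrArg₂ (· + ·) ?_ ?_
  · -- part 1 : blocks avoiding g0
    rw [Finset.filter_filter]
    rw [show R m (G.erase g0) (s+1) = ∑ S ∈ Finset.univ.filter (good m (G.erase g0) (s+1)),
        (Polynomial.X : Polynomial ℚ) ^ (∑ p ∈ S, (p.2:ℕ)) from rfl]
    apply Finset.sum_congr _ (fun _ _ => rfl)
    ext S
    rw [Finset.mem_filter]
    simp only [Finset.mem_filter, Finset.mem_univ, true_and, good]
    constructor
    · rintro ⟨⟨h1, h2, h3⟩, h4⟩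
      exact ⟨fun p hp => ⟨Finset.subset_erase.mpr ⟨(h1 p hp).1, h4 p hp⟩,
        (h1 p hp).2.1, (h1 p hp).2.2⟩, h2, h3⟩
    · rintro ⟨h1, h2, h3⟩
      refine ⟨⟨fun p hp => ⟨(Finset.subset_erase.mp (h1 p hp).1).1,
        (h1 p hp).2.1, (h1 p hp).2.2⟩, h2, h3⟩,
        fun p hp => (Finset.subset_erase.mp (h1 p hp).1).2⟩
  · -- part 2 : families with a block containing g0
    have key : ∀ S ∈ (Finset.univ.filter (good m G (s+1))).filter
        (fun S => ¬ ∀ p ∈ S, g0 ∉ p.1),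
        (Polynomial.X : Polynomial ℚ) ^ (∑ p ∈ S, (p.2:ℕ))
          = ∑ p0 ∈ S.filter (fun p => g0 ∈ p.1),
              (Polynomial.X : Polynomial ℚ) ^ ((p0.2:ℕ))
                * Polynomial.X ^ (∑ p ∈ S.erase p0, (p.2:ℕ)) := by
      intro S hS
      rw [Finset.mem_filter] at hS
      obtain ⟨hS1, hS2⟩ := hS
      rw [Finset.mem_filter] at hS1
      obtain ⟨-, hgood⟩ := hS1
      push_neg at hS2
      obtain ⟨p0, hp0S, hp0⟩ := hS2
      have huniq : S.filter (fun p => g0 ∈ p.1) = {p0} := by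
        rw [Finset.eq_singleton_iff_unique_mem]
        refine ⟨Finset.mem_filter.mpr ⟨hp0S, hp0⟩, fun q hq => ?_⟩
        rw [Finset.mem_filter] at hq
        by_contra hne
        exact Finset.disjoint_left.mp (hgood.2.1 q hq.1 p0 hp0S hne) hq.2 hp0
      rw [huniq, Finset.sum_singleton, ← pow_add,
        ← Finset.add_sum_erase _ _ hp0S]
    rw [Finset.sum_congr rfl key]
    have expand : ∀ p0 ∈ Finset.univ.filter (fun p : Pr m =>
          p.1 ⊆ G ∧ g0 ∈ p.1 ∧ 1 ≤ (p.2:ℕ) ∧ (p.2:ℕ) ≤ p.1.card - 2),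
        Polynomial.X ^ ((p0.2:ℕ)) * R m (G \ p0.1) s
          = ∑ S' ∈ Finset.univ.filter (good m (G \ p0.1) s),
              (Polynomial.X : Polynomial ℚ) ^ ((p0.2:ℕ))
                * Polynomial.X ^ (∑ p ∈ S', (p.2:ℕ)) := by
      intro p0 _
      rw [show R m (G \ p0.1) s = ∑ S ∈ Finset.univ.filter (good m (G \ p0.1) s),
        (Polynomial.X : Polynomial ℚ) ^ (∑ p ∈ S, (p.2:ℕ)) from rfl, Finset.mul_sum]
    rw [Finset.sum_congr rfl expand]
    rw [Finset.sum_sigma', Finset.sum_sigma']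
    refine Finset.sum_bij' (fun x _ => (⟨x.2, x.1.erase x.2⟩ : Σ _ : Pr m, Finset (Pr m)))
      (fun y _ => (⟨insert y.1 y.2, y.1⟩ : Σ _ : Finset (Pr m), Pr m)) ?_ ?_ ?_ ?_ ?_
    · -- maps to
      rintro ⟨S, p0⟩ hx
      rw [Finset.mem_sigma, Finset.mem_filter, Finset.mem_filter] at hx
      obtain ⟨⟨⟨-, hgood⟩, -⟩, hp0⟩ := hx
      rw [Finset.mem_filter] at hp0
      obtain ⟨hp0S, hp0g⟩ := hp0
      rw [Finset.mem_sigma, Finset.mem_filter, Finset.mem_filter]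
      obtain ⟨hblocks, hdisj, hcard⟩ := hgood
      refine ⟨⟨Finset.mem_univ _, (hblocks p0 hp0S).1, hp0g,
        (hblocks p0 hp0S).2.1, (hblocks p0 hp0S).2.2⟩, Finset.mem_univ _, ?_, ?_, ?_⟩
      · intro p hp
        rw [Finset.mem_erase] at hp
        refine ⟨Finset.subset_sdiff.mpr ⟨(hblocks p hp.2).1, hdisj p hp.2 p0 hp0S hp.1⟩,
          (hblocks p hp.2).2.1, (hblocks p hp.2).2.2⟩
      · intro p hp q hq hpq
        rw [Finset.mem_erase] at hp hq
        exact hdisj p hp.2 q hq.2 hpq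
      · rw [Finset.card_erase_of_mem hp0S, hcard]
        omega
    · -- maps back
      rintro ⟨p0, S'⟩ hy
      rw [Finset.mem_sigma, Finset.mem_filter, Finset.mem_filter] at hy
      obtain ⟨⟨-, hsub, hg, he1, he2⟩, -, hblocks, hdisj, hcard⟩ := hy
      have hp0ne : p0 ∉ S' := by
        intro hmem
        have := (hblocks p0 hmem).1
        have : g0 ∈ G \ p0.1 := this hg
        rw [Finset.mem_sdiff] at this
        exact this.2 hg
      rw [Finset.mem_sigma, Finset.mem_filter, Finset.mem_filter]
      refine ⟨⟨⟨Finset.mem_univ _, ?_, ?_, ?_⟩, ?_⟩, ?_⟩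
      · intro p hp
        rw [Finset.mem_insert] at hp
        rcases hp with rfl | hp
        · exact ⟨hsub, he1, he2⟩
        · obtain ⟨hps, hpe⟩ := hblocks p hp
          exact ⟨hps.trans (Finset.sdiff_subset), hpe⟩
      · intro p hp q hq hpq
        rw [Finset.mem_insert] at hp hq
        rcases hp with rfl | hp <;> rcases hq with rfl | hq
        · exact absurd rfl hpq
        · exact disjoint_sdiff_self_right.mono_right (hblocks q hq).1
        · exact (disjoint_sdiff_self_right.mono_right (hblocks p hp).1).symm
        · exact hdisj p hp q hq hpq
      · rw [Finset.card_insert_of_notMem hp0ne, hcard]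
      · push_neg
        exact ⟨p0, Finset.mem_insert_self _ _, hg⟩
      · rw [Finset.mem_filter]
        exact ⟨Finset.mem_insert_self _ _, hg⟩
    · -- left inverse
      rintro ⟨S, p0⟩ hx
      rw [Finset.mem_sigma] at hx
      have hp0 := hx.2
      rw [Finset.mem_filter] at hp0
      simp only
      congr 1
      exact Finset.insert_erase hp0.1
    · -- right inverse
      rintro ⟨p0, S'⟩ hy
      rw [Finset.mem_sigma, Finset.mem_filter, Finset.mem_filter] at hy
      obtain ⟨⟨-, hsub, hg, -⟩, -, hblocks, -, -⟩ := hy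
      have hp0ne : p0 ∉ S' := by
        intro hmem
        have h1 := (hblocks p0 hmem).1
        have h2 : g0 ∈ G \ p0.1 := h1 hg
        rw [Finset.mem_sdiff] at h2
        exact h2.2 hg
      simp only
      congr 1
      exact Finset.erase_insert hp0ne
    · -- values agree
      rintro ⟨S, p0⟩ hx
      rfl

open Classical in
lemma R_eq_F : ∀ (n : ℕ) (G : Finset (Fin (m+1))), G.card = n → ∀ s, R m G s = F n s := by
  intro n
  induction n using Nat.strong_induction_on with
  | _ n ih =>
    intro G hGcard s
    cases s with
    | zero => rw [R_zero, F_zero]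
    | succ s =>
      cases n with
      | zero =>
        have hGe : G = ∅ := Finset.card_eq_zero.mp hGcard
        rw [hGe, R_empty, F_zero']
      | succ n =>
        have hG : G.Nonempty := Finset.card_pos.mp (by omega)
        rw [R_rec m G hG s]
        set g0 := G.min' hG with hg0def
        have hg0G : g0 ∈ G := G.min'_mem hG
        have hcard' : (G.erase g0).card = n := by
          rw [Finset.card_erase_of_mem hg0G, hGcard]
          omega
        rw [ih n (by omega) _ hcard' (s+1), F_rec]
        congr 1
        have hstep1 : ∀ p0 ∈ Finset.univ.filter (fun p : Pr m =>
              p.1 ⊆ G ∧ g0 ∈ p.1 ∧ 1 ≤ (p.2:ℕ) ∧ (p.2:ℕ) ≤ p.1.card - 2),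
            (Polynomial.X : Polynomial ℚ) ^ ((p0.2:ℕ)) * R m (G \ p0.1) s
              = Polynomial.X ^ ((p0.2:ℕ)) * F (n + 1 - p0.1.card) s := by
          intro p0 hp0
          rw [Finset.mem_filter] at hp0
          obtain ⟨-, hsub, hg, he1, he2⟩ := hp0
          have hc1 : 1 ≤ p0.1.card := Finset.card_pos.mpr ⟨g0, hg⟩
          have hcc : p0.1.card ≤ n + 1 := hGcard ▸ Finset.card_le_card hsub
          have hcs : (G \ p0.1).card = n + 1 - p0.1.card := by
            rw [Finset.card_sdiff_of_subset hsub, hGcard]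
          rw [ih (n + 1 - p0.1.card) (by omega) _ hcs s]
        rw [Finset.sum_congr rfl hstep1]
        have hmaps : ∀ p0 ∈ Finset.univ.filter (fun p : Pr m =>
              p.1 ⊆ G ∧ g0 ∈ p.1 ∧ 1 ≤ (p.2:ℕ) ∧ (p.2:ℕ) ≤ p.1.card - 2),
            p0.1 ∈ G.powerset.filter (fun A => g0 ∈ A) := by
          intro p0 hp0
          rw [Finset.mem_filter] at hp0 ⊢
          exact ⟨Finset.mem_powerset.mpr hp0.2.1, hp0.2.2.1⟩
        rw [← Finset.sum_fiberwise_of_maps_to hmaps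
          (fun p0 => (Polynomial.X : Polynomial ℚ) ^ ((p0.2:ℕ)) * F (n + 1 - p0.1.card) s)]
        have hinner : ∀ A ∈ G.powerset.filter (fun A => g0 ∈ A),
            (∑ p0 ∈ (Finset.univ.filter (fun p : Pr m =>
                p.1 ⊆ G ∧ g0 ∈ p.1 ∧ 1 ≤ (p.2:ℕ) ∧ (p.2:ℕ) ≤ p.1.card - 2)).filter
                  (fun p0 => p0.1 = A),
              (Polynomial.X : Polynomial ℚ) ^ ((p0.2:ℕ)) * F (n + 1 - p0.1.card) s)
              = W A.card * F (n + 1 - A.card) s := by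
          intro A hA
          rw [Finset.mem_filter, Finset.mem_powerset] at hA
          have hAcard : A.card ≤ m + 1 := by
            have := Finset.card_le_card (Finset.subset_univ A)
            simpa using this
          rw [W, Finset.sum_mul]
          refine Finset.sum_bij' (fun p0 _ => ((p0.2:ℕ)))
            (fun e he => ((A, ⟨e, ?_⟩) : Pr m)) ?_ ?_ ?_ ?_ ?_
          · rw [Finset.mem_Icc] at he
            omega
          · rintro p0 hp0
            rw [Finset.mem_filter, Finset.mem_filter] at hp0
            obtain ⟨⟨-, -, -, he1, he2⟩, hfst⟩ := hp0
            rw [Finset.mem_Icc]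
            rw [hfst] at he2
            exact ⟨he1, he2⟩
          · rintro e he
            rw [Finset.mem_Icc] at he
            rw [Finset.mem_filter, Finset.mem_filter]
            refine ⟨⟨Finset.mem_univ _, hA.1, hA.2, ?_, ?_⟩, rfl⟩ <;> simp <;> omega
          · rintro ⟨B, b⟩ hp0
            rw [Finset.mem_filter, Finset.mem_filter] at hp0
            obtain ⟨-, hfst⟩ := hp0
            dsimp only at hfst ⊢
            subst hfst
            exact Prod.ext_iff.mpr ⟨rfl, Fin.ext rfl⟩
          · rintro e he
            simp
          · rintro p0 hp0
            rw [Finset.mem_filter, Finset.mem_filter] at hp0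
            obtain ⟨-, hfst⟩ := hp0
            rw [hfst]
        rw [Finset.sum_congr rfl hinner]
        have hbij : ∑ A ∈ G.powerset.filter (fun A => g0 ∈ A),
            W A.card * F (n + 1 - A.card) s
            = ∑ B ∈ (G.erase g0).powerset, W (B.card + 1) * F (n - B.card) s := by
          refine Finset.sum_bij' (fun A _ => A.erase g0) (fun B _ => insert g0 B)
            ?_ ?_ ?_ ?_ ?_
          · intro A hA
            rw [Finset.mem_filter, Finset.mem_powerset] at hA
            rw [Finset.mem_powerset]
            exact fun x hx => by
              rw [Finset.mem_erase] at hx ⊢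
              exact ⟨hx.1, hA.1 hx.2⟩
          · intro B hB
            rw [Finset.mem_powerset] at hB
            rw [Finset.mem_filter, Finset.mem_powerset]
            refine ⟨Finset.insert_subset hg0G (hB.trans (Finset.erase_subset _ _)),
              Finset.mem_insert_self _ _⟩
          · intro A hA
            rw [Finset.mem_filter] at hA
            exact Finset.insert_erase hA.2
          · intro B hB
            rw [Finset.mem_powerset] at hB
            have : g0 ∉ B := fun h => (Finset.mem_erase.mp (hB h)).1 rfl
            exact Finset.erase_insert this
          · intro A hA
            rw [Finset.mem_filter, Finset.mem_powerset] at hA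
            have h1 : 1 ≤ A.card := Finset.card_pos.mpr ⟨g0, hA.2⟩
            have h2 : A.card ≤ n + 1 := hGcard ▸ Finset.card_le_card hA.1
            rw [Finset.card_erase_of_mem hA.2,
              show A.card - 1 + 1 = A.card by omega,
              show n - (A.card - 1) = n + 1 - A.card by omega]
        rw [hbij, Finset.sum_powerset_apply_card (f := fun j => W (j + 1) * F (n - j) s)
          (x := G.erase g0), hcard']
        rw [← Finset.sum_range_reflect]
        refine Finset.sum_congr rfl fun k hk => ?_
        rw [Finset.mem_range] at hk
        have hk' : k ≤ n := by omega
        simp only [Nat.add_sub_cancel]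
        rw [Nat.choose_symm hk', show n - (n - k) = k by omega]

end Comb

end S15

open Classical in
/-- the coefficient of `z^s t^m/m!` in `e^t ∏_{i≥3} e^{zq[i-2]_q t^i/i!}`
equals `∑ q^{e_1+⋯+e_s}`, summed over all partitions with exponents: set partitions
(here of `{1,...,m+1}`, the block with exponent 0 absorbing the maximum element so that
parts of size `i ≥ 2` with exponent 0 contribute `t^{i-1}/(i-1)!`) in which exactly `s`
blocks have size ≥ 3 and carry an exponent `e` with `1 ≤ e ≤ size - 2`, and exactly one
block — the one containing the maximum — carries exponent 0. -/
theorem stmt_15 (s m : ℕ) :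
    (m.factorial : Polynomial ℚ) *
      PowerSeries.coeff (R := Polynomial ℚ) m ((s.factorial : ℚ)⁻¹ • (Eexp * Mser ^ s)) =
    ∑ c ∈ Finset.univ.filter
      (fun c : Finset (Finset (Fin (m + 1)) × Fin (m + 1)) =>
        (∀ p ∈ c, p.1.Nonempty) ∧
        (∀ p ∈ c, ∀ p' ∈ c, p ≠ p' → Disjoint p.1 p'.1) ∧
        (∀ x : Fin (m + 1), ∃ p ∈ c, x ∈ p.1) ∧
        (∀ p ∈ c, Fin.last m ∈ p.1 → p.2 = 0) ∧
        (∀ p ∈ c, Fin.last m ∉ p.1 →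
          3 ≤ p.1.card ∧ 1 ≤ (p.2 : ℕ) ∧ (p.2 : ℕ) ≤ p.1.card - 2) ∧
        (c.filter (fun p => Fin.last m ∉ p.1)).card = s),
      Polynomial.X ^ (∑ p ∈ c, (p.2 : ℕ)) := by
  classical
  set L := Fin.last m with hLdef
  set U := Finset.univ.erase L with hUdef
  have hL : (m.factorial : Polynomial ℚ) *
      PowerSeries.coeff (R := Polynomial ℚ) m ((s.factorial : ℚ)⁻¹ • (Eexp * Mser ^ s))
      = S15.F m s := by
    rw [PowerSeries.coeff_smul, S15.F, mul_smul, mul_smul_comm,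
      Polynomial.smul_eq_C_mul ((m.factorial:ℚ)), Polynomial.C_eq_natCast]
  rw [hL, ← S15.R_eq_F m m U (by
      rw [hUdef, Finset.card_erase_of_mem (Finset.mem_univ _), Finset.card_univ,
        Fintype.card_fin]; omega) s]
  rw [show S15.R m U s = ∑ S ∈ Finset.univ.filter (S15.good m U s),
      (Polynomial.X : Polynomial ℚ) ^ (∑ p ∈ S, (p.2:ℕ)) from rfl]
  have key1 : ∀ S : Finset (S15.Pr m), S15.good m U s S → ∀ p ∈ S, L ∉ p.1 :=
    fun S hS p hp hLp => (Finset.mem_erase.mp ((hS.1 p hp).1 hLp)).1 rfl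
  have key2 : ∀ S : Finset (S15.Pr m), S15.good m U s S →
      L ∈ (Finset.univ \ S.biUnion Prod.fst) := by
    intro S hS
    rw [Finset.mem_sdiff]
    refine ⟨Finset.mem_univ _, fun hmem => ?_⟩
    rw [Finset.mem_biUnion] at hmem
    obtain ⟨p, hp, hLp⟩ := hmem
    exact key1 S hS p hp hLp
  have key3 : ∀ S : Finset (S15.Pr m), S15.good m U s S →
      ((Finset.univ \ S.biUnion Prod.fst, (0:Fin (m+1))) : S15.Pr m) ∉ S := by
    intro S hS h
    exact (Finset.mem_erase.mp ((hS.1 _ h).1 (key2 S hS))).1 rfl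
  have key4 : ∀ S : Finset (S15.Pr m), S15.good m U s S →
      (insert ((Finset.univ \ S.biUnion Prod.fst, (0:Fin (m+1))) : S15.Pr m) S).filter
        (fun p => L ∉ p.1) = S := by
    intro S hS
    rw [Finset.filter_insert, if_neg (not_not_intro (key2 S hS))]
    exact Finset.filter_true_of_mem (key1 S hS)
  refine Finset.sum_bij'
    (fun S _ => insert ((Finset.univ \ S.biUnion Prod.fst, (0:Fin (m+1))) : S15.Pr m) S)
    (fun c _ => c.filter (fun p => L ∉ p.1)) ?_ ?_ ?_ ?_ ?_
  · -- i maps into c-filter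
    intro S hS
    rw [Finset.mem_filter] at hS
    obtain ⟨-, hS⟩ := hS
    obtain ⟨hb, hd, hc⟩ := hS
    rw [Finset.mem_filter]
    refine ⟨Finset.mem_univ _, ?_, ?_, ?_, ?_, ?_, ?_⟩
    · intro p hp
      rw [Finset.mem_insert] at hp
      rcases hp with rfl | hp
      · exact ⟨L, key2 S ⟨hb, hd, hc⟩⟩
      · have := (hb p hp).2
        exact Finset.card_pos.mp (by omega)
    · intro p hp q hq hpq
      rw [Finset.mem_insert] at hp hq
      rcases hp with rfl | hp <;> rcases hq with rfl | hq
      · exact absurd rfl hpq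
      · exact Finset.sdiff_disjoint.mono_right (Finset.subset_biUnion_of_mem Prod.fst hq)
      · exact (Finset.sdiff_disjoint.mono_right
          (Finset.subset_biUnion_of_mem Prod.fst hp)).symm
      · exact hd p hp q hq hpq
    · intro x
      by_cases hx : x ∈ S.biUnion Prod.fst
      · rw [Finset.mem_biUnion] at hx
        obtain ⟨p, hp, hxp⟩ := hx
        exact ⟨p, Finset.mem_insert_of_mem hp, hxp⟩
      · exact ⟨_, Finset.mem_insert_self _ _, Finset.mem_sdiff.mpr ⟨Finset.mem_univ _, hx⟩⟩
    · intro p hp hLp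
      rw [Finset.mem_insert] at hp
      rcases hp with rfl | hp
      · rfl
      · exact absurd hLp (key1 S ⟨hb, hd, hc⟩ p hp)
    · intro p hp hLp
      rw [Finset.mem_insert] at hp
      rcases hp with rfl | hp
      · exact absurd (key2 S ⟨hb, hd, hc⟩) hLp
      · have := (hb p hp).2
        exact ⟨by omega, this.1, this.2⟩
    · rw [key4 S ⟨hb, hd, hc⟩]
      exact hc
  · -- j maps into good-filter
    intro c hc
    rw [Finset.mem_filter] at hc
    obtain ⟨-, h1, h2, h3, h4, h5, h6⟩ := hc
    rw [Finset.mem_filter]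
    refine ⟨Finset.mem_univ _, ?_, ?_, h6⟩
    · intro p hp
      rw [Finset.mem_filter] at hp
      obtain ⟨hpc, hLp⟩ := hp
      obtain ⟨hcard, hb⟩ := h5 p hpc hLp
      refine ⟨fun x hx => Finset.mem_erase.mpr ⟨fun hxL => hLp (hxL ▸ hx), Finset.mem_univ _⟩,
        hb⟩
    · intro p hp q hq hpq
      rw [Finset.mem_filter] at hp hq
      exact h2 p hp.1 q hq.1 hpq
  · -- left inverse : j (i S) = S
    intro S hS
    rw [Finset.mem_filter] at hS
    exact key4 S hS.2
  · -- right inverse : i (j c) = c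
    intro c hc
    rw [Finset.mem_filter] at hc
    obtain ⟨-, h1, h2, h3, h4, h5, h6⟩ := hc
    set S := c.filter (fun p => L ∉ p.1) with hSdef
    set B0 := Finset.univ \ S.biUnion Prod.fst with hB0def
    have hLB0 : L ∈ B0 := by
      rw [hB0def, Finset.mem_sdiff]
      refine ⟨Finset.mem_univ _, fun hmem => ?_⟩
      rw [Finset.mem_biUnion] at hmem
      obtain ⟨p, hpS, hLp⟩ := hmem
      rw [hSdef, Finset.mem_filter] at hpS
      exact hpS.2 hLp
    have hu : ∀ q ∈ c, L ∈ q.1 → q = ((B0, 0) : S15.Pr m) := by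
      intro q hq hLq
      have hq2 : q.2 = 0 := h4 q hq hLq
      have hq1 : q.1 = B0 := by
        ext x
        rw [hB0def, Finset.mem_sdiff]
        constructor
        · intro hxq
          refine ⟨Finset.mem_univ _, fun hxB => ?_⟩
          rw [Finset.mem_biUnion] at hxB
          obtain ⟨p, hpS, hxp⟩ := hxB
          rw [hSdef, Finset.mem_filter] at hpS
          have hpq : p ≠ q := fun h => hpS.2 (h ▸ hLq)
          exact Finset.disjoint_left.mp (h2 p hpS.1 q hq hpq) hxp hxq
        · rintro ⟨-, hxB⟩
          obtain ⟨p, hpc, hxp⟩ := h3 x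
          by_cases hLp : L ∈ p.1
          · have hpq : p = q := by
              by_contra hne
              exact Finset.disjoint_left.mp (h2 p hpc q hq hne) hLp hLq
            exact hpq ▸ hxp
          · exact absurd (Finset.mem_biUnion.mpr
              ⟨p, Finset.mem_filter.mpr ⟨hpc, hLp⟩, hxp⟩) hxB
      exact Prod.ext_iff.mpr ⟨hq1, hq2⟩
    have hmem : ((B0, 0) : S15.Pr m) ∈ c := by
      obtain ⟨p, hpc, hLp⟩ := h3 L
      rw [← hu p hpc hLp]
      exact hpc
    ext q
    rw [Finset.mem_insert]
    constructor
    · rintro (rfl | hq)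
      · exact hmem
      · exact (Finset.mem_filter.mp hq).1
    · intro hq
      by_cases hLq : L ∈ q.1
      · exact Or.inl (hu q hq hLq)
      · exact Or.inr (Finset.mem_filter.mpr ⟨hq, hLq⟩)
  · -- values agree
    intro S hS
    rw [Finset.mem_filter] at hS
    rw [Finset.sum_insert (key3 S hS.2)]
    norm_num
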